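/- Let m ≥ 3 and let X₁, …, X_m be arbitrary smooth vector fields on ℝ^n. Then the m-ary bracket {f₁, …, f_m} := det((X_i f_j)_{1≤i,j≤m}) induced by the decomposable m-vector field X₁∧⋯∧X_m satisfies the generalized Jacobi identity of order m; that is, every decomposable multivector field of order m ≥ 3 is a generalized Poisson tensor. -/

import Mathlib

/-- A (not necessarily smooth) vector field on `ℝⁿ`, i.e. a map `ℝⁿ → ℝⁿ`. -/
abbrev VF (n : ℕ) : Type := (Fin n → ℝ) → (Fin n → ℝ)

/-- The action of a vector field `X` on a function `f`:
`(X f)(x) = Df(x)[X(x)]` (directional derivative). -/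
noncomputable def vAct {n : ℕ} (X : VF n) (f : (Fin n → ℝ) → ℝ) : (Fin n → ℝ) → ℝ :=
  fun x => fderiv ℝ f x (X x)

/-- The Lie bracket of two vector fields:
`[X, Y](x) = DY(x)[X(x)] − DX(x)[Y(x)]`. -/
noncomputable def vLie {n : ℕ} (X Y : VF n) : VF n :=
  fun x => fderiv ℝ Y x (X x) - fderiv ℝ X x (Y x)

/-- The `m`-ary bracket induced by the decomposable `m`-vector field `Z 0 ∧ ⋯ ∧ Z (m-1)`:
the determinant of the matrix whose `(i, j)` entry is `(Z i) (f j)`. -/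
noncomputable def detBracket {n m : ℕ} (Z : Fin m → VF n)
    (f : Fin m → ((Fin n → ℝ) → ℝ)) : (Fin n → ℝ) → ℝ :=
  fun x => Matrix.det (Matrix.of fun i j => vAct (Z i) (f j) x)

/-- The generalized Jacobi identity of order `m` for an `m`-ary bracket `B` on smooth
functions on `ℝⁿ`:
`∑_{σ ∈ S_{2m−1}} sign σ • B(B(f_{σ(1)}, …, f_{σ(m)}), f_{σ(m+1)}, …, f_{σ(2m−1)}) = 0`. -/
def GJI (n m : ℕ) (B : (Fin m → ((Fin n → ℝ) → ℝ)) → ((Fin n → ℝ) → ℝ)) : Prop :=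
  ∀ f : Fin (2 * m - 1) → ((Fin n → ℝ) → ℝ), (∀ i, ContDiff ℝ (⊤ : ℕ∞) (f i)) →
    ∀ x, (∑ σ : Equiv.Perm (Fin (2 * m - 1)),
      ((Equiv.Perm.sign σ : ℤ) : ℝ) *
        B (fun i : Fin m =>
            if _hi : (i : ℕ) = 0 then
              B (fun k : Fin m => f (σ ⟨(k : ℕ), lt_of_lt_of_le k.isLt (by omega)⟩))
            else f (σ ⟨m - 1 + (i : ℕ), by have hi := i.isLt; omega⟩)) x) = 0

namespace Stmt11

open Finset

/-- Embedding of the inner slots. -/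
def inj' (m : ℕ) (k : Fin m) : Fin (2 * m - 1) :=
  ⟨(k : ℕ), by have := k.isLt; omega⟩

/-- Embedding of the outer slots. -/
def out' (m : ℕ) (i : Fin m) : Fin (2 * m - 1) :=
  ⟨m - 1 + (i : ℕ), by have := i.isLt; omega⟩

lemma inj'_ne_inj' {m : ℕ} {k k' : Fin m} (h : k ≠ k') : inj' m k ≠ inj' m k' := by
  intro hh
  exact h (Fin.ext (by simpa [inj'] using congrArg Fin.val hh))

lemma inj'_ne_out' {m : ℕ} [NeZero m] (k : Fin m) {j : Fin m} (hj : j ≠ 0) :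
    inj' m k ≠ out' m j := by
  intro hh
  have h1 := congrArg Fin.val hh
  simp only [inj', out'] at h1
  have h2 : (j : ℕ) ≠ 0 := by
    intro h3
    exact hj (Fin.ext (by rw [h3, Fin.val_zero]))
  have := k.isLt
  omega

lemma out'_ne_out' {m : ℕ} {j j' : Fin m} (h : j ≠ j') : out' m j ≠ out' m j' := by
  intro hh
  have h1 := congrArg Fin.val hh
  simp only [out'] at h1
  exact h (Fin.ext (by omega))

/-- The "Hessian" part of a single expanded term. -/
noncomputable def QH {n m : ℕ} [NeZero m] (Z : Fin m → VF n)
    (f : Fin (2 * m - 1) → ((Fin n → ℝ) → ℝ)) (x : Fin n → ℝ)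
    (τ ρ : Equiv.Perm (Fin m)) (l : Fin m) (σ : Equiv.Perm (Fin (2 * m - 1))) : ℝ :=
  fderiv ℝ (fderiv ℝ (f (σ (inj' m l)))) x (Z (τ 0) x) (Z (ρ l) x) *
    ((∏ l' ∈ Finset.univ.erase l, fderiv ℝ (f (σ (inj' m l'))) x (Z (ρ l') x)) *
      ∏ j ∈ Finset.univ.erase 0, fderiv ℝ (f (σ (out' m j))) x (Z (τ j) x))

/-- The "derivative of the vector field" part of a single expanded term. -/
noncomputable def QW {n m : ℕ} [NeZero m] (Z : Fin m → VF n)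
    (f : Fin (2 * m - 1) → ((Fin n → ℝ) → ℝ)) (x : Fin n → ℝ)
    (τ ρ : Equiv.Perm (Fin m)) (l : Fin m) (σ : Equiv.Perm (Fin (2 * m - 1))) : ℝ :=
  fderiv ℝ (f (σ (inj' m l))) x (fderiv ℝ (Z (ρ l)) x (Z (τ 0) x)) *
    ((∏ l' ∈ Finset.univ.erase l, fderiv ℝ (f (σ (inj' m l'))) x (Z (ρ l') x)) *
      ∏ j ∈ Finset.univ.erase 0, fderiv ℝ (f (σ (out' m j))) x (Z (τ j) x))

/-- Full expanded term for a shape `p = (τ, ρ, l)`. -/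
noncomputable def Wt {n m : ℕ} [NeZero m] (Z : Fin m → VF n)
    (f : Fin (2 * m - 1) → ((Fin n → ℝ) → ℝ)) (x : Fin n → ℝ)
    (p : Equiv.Perm (Fin m) × Equiv.Perm (Fin m) × Fin m)
    (σ : Equiv.Perm (Fin (2 * m - 1))) : ℝ :=
  (((Equiv.Perm.sign p.1 : ℤ) : ℝ) * ((Equiv.Perm.sign p.2.1 : ℤ) : ℝ)) *
    (QH Z f x p.1 p.2.1 p.2.2 σ + QW Z f x p.1 p.2.1 p.2.2 σ)

/-- Leibniz expansion of the bracket. -/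
lemma lemA {n m : ℕ} (Z : Fin m → VF n) (g : Fin m → ((Fin n → ℝ) → ℝ)) (y : Fin n → ℝ) :
    detBracket Z g y =
      ∑ ρ : Equiv.Perm (Fin m), ((Equiv.Perm.sign ρ : ℤ) : ℝ) *
        ∏ l, fderiv ℝ (g l) y (Z (ρ l) y) := by
  simp only [detBracket, Matrix.det_apply, Matrix.of_apply, vAct]
  refine Finset.sum_congr rfl fun ρ _ => ?_
  rw [Units.smul_def, zsmul_eq_mul]

/-- Derivative of the bracket in a direction, fully expanded. -/
lemma lemC {n m : ℕ} (Z : Fin m → VF n) (hZ : ∀ i, ContDiff ℝ (⊤ : ℕ∞) (Z i))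
    (g : Fin m → ((Fin n → ℝ) → ℝ)) (hg : ∀ j, ContDiff ℝ (⊤ : ℕ∞) (g j))
    (x : Fin n → ℝ) (i : Fin m) :
    fderiv ℝ (detBracket Z g) x (Z i x) =
      ∑ ρ : Equiv.Perm (Fin m), ((Equiv.Perm.sign ρ : ℤ) : ℝ) *
        ∑ l, (∏ l' ∈ Finset.univ.erase l, fderiv ℝ (g l') x (Z (ρ l') x)) *
          (fderiv ℝ (g l) x (fderiv ℝ (Z (ρ l)) x (Z i x))
            + fderiv ℝ (fderiv ℝ (g l)) x (Z i x) (Z (ρ l) x)) := by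
  have hrepr : detBracket Z g = fun y => ∑ ρ : Equiv.Perm (Fin m),
      ((Equiv.Perm.sign ρ : ℤ) : ℝ) * ∏ l, fderiv ℝ (g l) y (Z (ρ l) y) :=
    funext (lemA Z g)
  have hE : ∀ (k l : Fin m), HasFDerivAt (fun y => fderiv ℝ (g l) y (Z k y))
      ((fderiv ℝ (g l) x).comp (fderiv ℝ (Z k) x)
        + (fderiv ℝ (fderiv ℝ (g l)) x).flip (Z k x)) x := by
    intro k l
    have hder : ContDiff ℝ (⊤ : ℕ∞) (fderiv ℝ (g l)) :=
      (hg l).fderiv_right (by exact_mod_cast le_refl _)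
    have h1 : HasFDerivAt (fderiv ℝ (g l)) (fderiv ℝ (fderiv ℝ (g l)) x) x :=
      ((hder.differentiable (by simp)) x).hasFDerivAt
    have h2 : HasFDerivAt (Z k) (fderiv ℝ (Z k) x) x :=
      (((hZ k).differentiable (by simp)) x).hasFDerivAt
    exact h1.clm_apply h2
  have hD : HasFDerivAt (detBracket Z g)
      (∑ ρ : Equiv.Perm (Fin m), ((Equiv.Perm.sign ρ : ℤ) : ℝ) •
        ∑ l, (∏ l' ∈ Finset.univ.erase l, fderiv ℝ (g l') x (Z (ρ l') x)) •
          ((fderiv ℝ (g l) x).comp (fderiv ℝ (Z (ρ l)) x)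
            + (fderiv ℝ (fderiv ℝ (g l)) x).flip (Z (ρ l) x))) x := by
    rw [hrepr]
    exact HasFDerivAt.fun_sum fun ρ _ =>
      (HasFDerivAt.finset_prod fun l _ => hE (ρ l) l).const_mul _
  rw [hD.fderiv]
  simp [ContinuousLinearMap.sum_apply, ContinuousLinearMap.smul_apply,
    ContinuousLinearMap.add_apply, ContinuousLinearMap.coe_comp',
    ContinuousLinearMap.flip_apply, smul_eq_mul, Function.comp, mul_add]

/-- Kill a signed sum over permutations using a transposition-invariance. -/
lemma swap_sum {α : Type*} [DecidableEq α] [Fintype α] {c₁ c₂ : α} (h : c₁ ≠ c₂)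
    (Q : Equiv.Perm α → ℝ) (hQ : ∀ σ, Q (σ * Equiv.swap c₁ c₂) = Q σ) :
    ∑ σ : Equiv.Perm α, ((Equiv.Perm.sign σ : ℤ) : ℝ) * Q σ = 0 := by
  have h2 : ∑ σ : Equiv.Perm α,
      ((Equiv.Perm.sign (σ * Equiv.swap c₁ c₂) : ℤ) : ℝ) * Q (σ * Equiv.swap c₁ c₂)
      = ∑ σ : Equiv.Perm α, ((Equiv.Perm.sign σ : ℤ) : ℝ) * Q σ :=
    Fintype.sum_equiv (Equiv.mulRight (Equiv.swap c₁ c₂)) _ _ fun σ => rfl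
  have h3 : ∀ σ : Equiv.Perm α,
      ((Equiv.Perm.sign (σ * Equiv.swap c₁ c₂) : ℤ) : ℝ) = -((Equiv.Perm.sign σ : ℤ) : ℝ) := by
    intro σ
    rw [Equiv.Perm.sign_mul, Equiv.Perm.sign_swap h]
    simp
  have h4 : ∑ σ : Equiv.Perm α, ((Equiv.Perm.sign σ : ℤ) : ℝ) * Q σ
      = -∑ σ : Equiv.Perm α, ((Equiv.Perm.sign σ : ℤ) : ℝ) * Q σ := by
    conv_lhs => rw [← h2]
    rw [← Finset.sum_neg_distrib]
    exact Finset.sum_congr rfl fun σ _ => by rw [hQ σ, h3 σ]; ring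
  linarith


/-- Expansion of one outer term of the Jacobiator into shapes. -/
lemma claim1 {n m : ℕ} [NeZero m] (Z : Fin m → VF n) (hZ : ∀ i, ContDiff ℝ (⊤ : ℕ∞) (Z i))
    (f : Fin (2 * m - 1) → ((Fin n → ℝ) → ℝ)) (hf : ∀ i, ContDiff ℝ (⊤ : ℕ∞) (f i))
    (x : Fin n → ℝ) (σ : Equiv.Perm (Fin (2 * m - 1))) :
    detBracket Z (fun i : Fin m =>
      if _hi : (i : ℕ) = 0 then detBracket Z (fun k : Fin m => f (σ (inj' m k)))
      else f (σ (out' m i))) x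
    = ∑ p : Equiv.Perm (Fin m) × Equiv.Perm (Fin m) × Fin m, Wt Z f x p σ := by
  have h0 : ((0 : Fin m) : ℕ) = 0 := Fin.val_zero m
  calc detBracket Z (fun i : Fin m =>
        if _hi : (i : ℕ) = 0 then detBracket Z (fun k : Fin m => f (σ (inj' m k)))
        else f (σ (out' m i))) x
      = ∑ τ : Equiv.Perm (Fin m), ((Equiv.Perm.sign τ : ℤ) : ℝ) *
          ∏ j, fderiv ℝ (if _hi : ((j : Fin m) : ℕ) = 0 then
              detBracket Z (fun k : Fin m => f (σ (inj' m k)))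
            else f (σ (out' m j))) x (Z (τ j) x) := lemA Z _ x
    _ = ∑ τ : Equiv.Perm (Fin m), ((Equiv.Perm.sign τ : ℤ) : ℝ) *
          (fderiv ℝ (detBracket Z (fun k : Fin m => f (σ (inj' m k)))) x (Z (τ 0) x) *
            ∏ j ∈ Finset.univ.erase 0, fderiv ℝ (f (σ (out' m j))) x (Z (τ j) x)) := by
        refine Finset.sum_congr rfl fun τ _ =>
          congrArg (fun t => ((Equiv.Perm.sign τ : ℤ) : ℝ) * t) ?_
        rw [← Finset.mul_prod_erase Finset.univ _ (Finset.mem_univ (0 : Fin m))]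
        refine congrArg₂ (· * ·) ?_ (Finset.prod_congr rfl fun j hj => ?_)
        · rw [dif_pos h0]
        · have hj0 : (j : ℕ) ≠ 0 := fun hc => (Finset.mem_erase.mp hj).1 (Fin.ext (by rw [hc, h0]))
          rw [dif_neg hj0]
    _ = ∑ τ : Equiv.Perm (Fin m), ((Equiv.Perm.sign τ : ℤ) : ℝ) *
          ((∑ ρ : Equiv.Perm (Fin m), ((Equiv.Perm.sign ρ : ℤ) : ℝ) *
            ∑ l, (∏ l' ∈ Finset.univ.erase l, fderiv ℝ (f (σ (inj' m l'))) x (Z (ρ l') x)) *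
              (fderiv ℝ (f (σ (inj' m l))) x (fderiv ℝ (Z (ρ l)) x (Z (τ 0) x))
                + fderiv ℝ (fderiv ℝ (f (σ (inj' m l)))) x (Z (τ 0) x) (Z (ρ l) x))) *
            ∏ j ∈ Finset.univ.erase 0, fderiv ℝ (f (σ (out' m j))) x (Z (τ j) x)) := by
        refine Finset.sum_congr rfl fun τ _ => ?_
        rw [lemC Z hZ _ (fun k => hf _) x (τ 0)]
    _ = ∑ p : Equiv.Perm (Fin m) × Equiv.Perm (Fin m) × Fin m, Wt Z f x p σ := by
        simp only [Fintype.sum_prod_type, Wt, QH, QW, Finset.sum_mul, Finset.mul_sum]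
        refine Finset.sum_congr rfl fun τ _ => Finset.sum_congr rfl fun ρ _ =>
          Finset.sum_congr rfl fun l _ => by ring

/-- Each shape dies under the signed sum over `σ`, by a transposition trick:
some direction `Z j₀` occurs both as an inner and an outer row. -/
lemma claim2 {n m : ℕ} [NeZero m] (hm : 3 ≤ m) (Z : Fin m → VF n)
    (f : Fin (2 * m - 1) → ((Fin n → ℝ) → ℝ)) (x : Fin n → ℝ)
    (p : Equiv.Perm (Fin m) × Equiv.Perm (Fin m) × Fin m) :
    ∑ σ : Equiv.Perm (Fin (2 * m - 1)), ((Equiv.Perm.sign σ : ℤ) : ℝ) * Wt Z f x p σ = 0 := by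
  obtain ⟨τ, ρ, l⟩ := p
  obtain ⟨j₀, hj₀τ, hj₀ρ⟩ : ∃ j₀ : Fin m, j₀ ≠ τ 0 ∧ j₀ ≠ ρ l := by
    by_contra hcon
    push_neg at hcon
    have hsub : (Finset.univ : Finset (Fin m)) ⊆ {τ 0, ρ l} := by
      intro j _
      rcases eq_or_ne j (τ 0) with h1 | h1
      · simp [h1]
      · simp [hcon j h1]
    have hc1 := Finset.card_le_card hsub
    have hc2 : ({τ 0, ρ l} : Finset (Fin m)).card ≤ 2 := by
      refine le_trans (Finset.card_insert_le _ _) ?_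
      simp
    simp only [Finset.card_univ, Fintype.card_fin] at hc1
    omega
  have hρl₁ : ρ (ρ.symm j₀) = j₀ := ρ.apply_symm_apply j₀
  have hτj₁ : τ (τ.symm j₀) = j₀ := τ.apply_symm_apply j₀
  have hl₁l : ρ.symm j₀ ≠ l := fun h => hj₀ρ (by rw [← hρl₁, h])
  have hj₁0 : τ.symm j₀ ≠ 0 := fun h => hj₀τ (by rw [← hτj₁, h])
  have hc₁₂ : inj' m (ρ.symm j₀) ≠ out' m (τ.symm j₀) := inj'_ne_out' _ hj₁0
  refine swap_sum hc₁₂ _ fun σ => ?_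
  have hfixl : (Equiv.swap (inj' m (ρ.symm j₀)) (out' m (τ.symm j₀))) (inj' m l) = inj' m l :=
    Equiv.swap_apply_of_ne_of_ne (inj'_ne_inj' fun h => hl₁l h.symm) (inj'_ne_out' l hj₁0)
  have hl₁mem : ρ.symm j₀ ∈ Finset.univ.erase l := Finset.mem_erase.mpr ⟨hl₁l, Finset.mem_univ _⟩
  have hj₁mem : τ.symm j₀ ∈ Finset.univ.erase (0 : Fin m) :=
    Finset.mem_erase.mpr ⟨hj₁0, Finset.mem_univ _⟩
  have hP : (∏ l' ∈ Finset.univ.erase l,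
        fderiv ℝ (f (σ ((Equiv.swap (inj' m (ρ.symm j₀)) (out' m (τ.symm j₀))) (inj' m l')))) x
          (Z (ρ l') x)) *
      (∏ j ∈ Finset.univ.erase 0,
        fderiv ℝ (f (σ ((Equiv.swap (inj' m (ρ.symm j₀)) (out' m (τ.symm j₀))) (out' m j)))) x
          (Z (τ j) x))
      = (∏ l' ∈ Finset.univ.erase l, fderiv ℝ (f (σ (inj' m l'))) x (Z (ρ l') x)) *
        (∏ j ∈ Finset.univ.erase 0, fderiv ℝ (f (σ (out' m j))) x (Z (τ j) x)) := by
    have hrest1 : ∀ l' ∈ (Finset.univ.erase l).erase (ρ.symm j₀),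
        fderiv ℝ (f (σ ((Equiv.swap (inj' m (ρ.symm j₀)) (out' m (τ.symm j₀))) (inj' m l')))) x
            (Z (ρ l') x)
          = fderiv ℝ (f (σ (inj' m l'))) x (Z (ρ l') x) := by
      intro l' hl'
      rw [Equiv.swap_apply_of_ne_of_ne (inj'_ne_inj' (Finset.mem_erase.mp hl').1)
        (inj'_ne_out' l' hj₁0)]
    have hrest2 : ∀ j ∈ (Finset.univ.erase (0 : Fin m)).erase (τ.symm j₀),
        fderiv ℝ (f (σ ((Equiv.swap (inj' m (ρ.symm j₀)) (out' m (τ.symm j₀))) (out' m j)))) x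
            (Z (τ j) x)
          = fderiv ℝ (f (σ (out' m j))) x (Z (τ j) x) := by
      intro j hj
      have hj2 := Finset.mem_erase.mp hj
      have hjne0 : j ≠ 0 := (Finset.mem_erase.mp hj2.2).1
      rw [Equiv.swap_apply_of_ne_of_ne (Ne.symm (inj'_ne_out' (ρ.symm j₀) hjne0))
        (out'_ne_out' hj2.1)]
    calc (∏ l' ∈ Finset.univ.erase l,
          fderiv ℝ (f (σ ((Equiv.swap (inj' m (ρ.symm j₀)) (out' m (τ.symm j₀))) (inj' m l')))) x
            (Z (ρ l') x)) *
        (∏ j ∈ Finset.univ.erase 0,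
          fderiv ℝ (f (σ ((Equiv.swap (inj' m (ρ.symm j₀)) (out' m (τ.symm j₀))) (out' m j)))) x
            (Z (τ j) x))
        = (fderiv ℝ (f (σ (out' m (τ.symm j₀)))) x (Z j₀ x) *
            ∏ l' ∈ (Finset.univ.erase l).erase (ρ.symm j₀),
              fderiv ℝ (f (σ (inj' m l'))) x (Z (ρ l') x)) *
          (fderiv ℝ (f (σ (inj' m (ρ.symm j₀)))) x (Z j₀ x) *
            ∏ j ∈ (Finset.univ.erase (0 : Fin m)).erase (τ.symm j₀),
              fderiv ℝ (f (σ (out' m j))) x (Z (τ j) x)) := by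
          rw [← Finset.mul_prod_erase _ _ hl₁mem, ← Finset.mul_prod_erase _ _ hj₁mem]
          congr 1
          · congr 1
            · rw [Equiv.swap_apply_left, hρl₁]
            · exact Finset.prod_congr rfl hrest1
          · congr 1
            · rw [Equiv.swap_apply_right, hτj₁]
            · exact Finset.prod_congr rfl hrest2
      _ = (fderiv ℝ (f (σ (inj' m (ρ.symm j₀)))) x (Z j₀ x) *
            ∏ l' ∈ (Finset.univ.erase l).erase (ρ.symm j₀),
              fderiv ℝ (f (σ (inj' m l'))) x (Z (ρ l') x)) *
          (fderiv ℝ (f (σ (out' m (τ.symm j₀)))) x (Z j₀ x) *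
            ∏ j ∈ (Finset.univ.erase (0 : Fin m)).erase (τ.symm j₀),
              fderiv ℝ (f (σ (out' m j))) x (Z (τ j) x)) := by ring
      _ = (∏ l' ∈ Finset.univ.erase l, fderiv ℝ (f (σ (inj' m l'))) x (Z (ρ l') x)) *
          (∏ j ∈ Finset.univ.erase 0, fderiv ℝ (f (σ (out' m j))) x (Z (τ j) x)) := by
          rw [← Finset.mul_prod_erase _
              (fun l' => fderiv ℝ (f (σ (inj' m l'))) x (Z (ρ l') x)) hl₁mem,
            ← Finset.mul_prod_erase _
              (fun j => fderiv ℝ (f (σ (out' m j))) x (Z (τ j) x)) hj₁mem, hρl₁, hτj₁]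
  simp only [Wt, QH, QW, Equiv.Perm.mul_apply]
  rw [hfixl, hP]

end Stmt11

theorem statement11 (n m : ℕ) (hm : 3 ≤ m) (Z : Fin m → VF n)
    (hZ : ∀ i, ContDiff ℝ (⊤ : ℕ∞) (Z i)) :
    GJI n m (detBracket Z) := by
  intro f hf x
  haveI : NeZero m := ⟨by omega⟩
  trans (∑ σ : Equiv.Perm (Fin (2 * m - 1)), ((Equiv.Perm.sign σ : ℤ) : ℝ) *
    ∑ p : Equiv.Perm (Fin m) × Equiv.Perm (Fin m) × Fin m, Stmt11.Wt Z f x p σ)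
  · exact Finset.sum_congr rfl fun σ _ =>
      congrArg (fun t => ((Equiv.Perm.sign σ : ℤ) : ℝ) * t) (Stmt11.claim1 Z hZ f hf x σ)
  · simp only [Finset.mul_sum]
    rw [Finset.sum_comm]
    exact Finset.sum_eq_zero fun p _ => Stmt11.claim2 hm Z f x p
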